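/- Let S be a compact metrizable space with a closed partial order. Then every sequence (μ_n) of probability measures on S that is increasing in the stochastic order converges weakly to a limit. -/

import Mathlib

open MeasureTheory Filter

/-- `μ` is smaller than `ν` in the stochastic order: there is a coupling `lam` with
marginals `μ` and `ν` concentrated on `{(x,y) : x ≤ y}`. -/
def stochLE {S : Type*} [MeasurableSpace S] [Preorder S] (μ ν : Measure S) : Prop :=
  ∃ lam : Measure (S × S), IsProbabilityMeasure lam ∧
    lam.map Prod.fst = μ ∧ lam.map Prod.snd = ν ∧
    lam {p : S × S | p.1 ≤ p.2} = 1

open Topology TopologicalSpace ProbabilityTheory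
open scoped ENNReal NNReal


section Topo
variable {S : Type*} [MetricSpace S] [CompactSpace S] [PartialOrder S]
  (hclosed : IsClosed {p : S × S | p.1 ≤ p.2})


include hclosed
set_option linter.unusedSectionVars false

/-- limits preserve ≤ -/
lemma le_of_tendsto_pair {u v : ℕ → S} {a b : S} (hu : Tendsto u atTop (𝓝 a))
    (hv : Tendsto v atTop (𝓝 b)) (h : ∀ᶠ n in atTop, u n ≤ v n) : a ≤ b :=
  hclosed.mem_of_tendsto (hu.prodMk_nhds hv) h

/-- monotone sequences in a compact pospace converge -/
lemma mono_tendsto {z : ℕ → S} (hz : Monotone z) : ∃ a, Tendsto z atTop (𝓝 a) := by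
  obtain ⟨a, -, φ, hφ, ha⟩ := isCompact_univ.tendsto_subseq (x := z) (fun n => Set.mem_univ _)
  have key : ∀ m, z m ≤ a := by
    intro m
    refine le_of_tendsto_pair hclosed (u := fun _ => z m) tendsto_const_nhds ha ?_
    filter_upwards [eventually_ge_atTop m] with k hk
    exact hz (hk.trans (hφ.le_apply))
  refine ⟨a, tendsto_of_subseq_tendsto (fun ns hns => ?_)⟩
  obtain ⟨b, -, ψ, hψ, hb⟩ := isCompact_univ.tendsto_subseq (x := z ∘ ns) (fun n => Set.mem_univ _)
  have hba : b ≤ a := le_of_tendsto_pair hclosed hb tendsto_const_nhds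
    (Eventually.of_forall fun k => key _)
  have hab : a ≤ b := by
    -- every z m ≤ b as well
    have key2 : ∀ m, z m ≤ b := by
      intro m
      refine le_of_tendsto_pair hclosed (u := fun _ => z m) tendsto_const_nhds hb ?_
      have : Tendsto (fun k => ns (ψ k)) atTop atTop := hns.comp hψ.tendsto_atTop
      filter_upwards [this.eventually_ge_atTop m] with k hk
      exact hz hk
    exact le_of_tendsto_pair hclosed ha tendsto_const_nhds
      (Eventually.of_forall fun k => key2 _)
  exact ⟨ψ, hba.antisymm hab ▸ hb⟩

/-- uniform bound on the number of ε-jumps along monotone chains -/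
lemma gap_bound [Nonempty S] (ε : ℝ) (hε : 0 < ε) :
    ∃ K : ℕ, ∀ z : ℕ → S, Monotone z → ∀ a b : ℕ → ℕ, (∀ t, a t ≤ b t) →
      (∀ t, b t ≤ a (t + 1)) → ∃ t < K, dist (z (a t)) (z (b t)) < ε := by
  by_contra hcon
  push_neg at hcon
  choose z hz a b hab hba hbad using hcon
  -- pair sequences
  classical
  set v : ℕ → ℕ → S × S := fun K t =>
    if t < K then (z K (a K t), z K (b K t)) else (z K (b K (K - 1)), z K (b K (K - 1))) with hv
  have h1 : ∀ K t, (v K t).1 ≤ (v K t).2 := by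
    intro K t
    by_cases h : t < K <;> simp [hv, h]
    exact hz K (hab K t)
  have h2 : ∀ K t, (v K t).2 ≤ (v K (t + 1)).1 := by
    intro K t
    by_cases h : t < K
    · by_cases h' : t + 1 < K
      · simp only [hv, if_pos h, if_pos h']
        exact hz K (hba K t)
      · have ht : t = K - 1 := by omega
        simp only [hv, if_pos h, if_neg h']
        subst ht; exact le_refl _
    · have h' : ¬ (t + 1 < K) := by omega
      simp [hv, if_neg h, if_neg h']
  have h3 : ∀ K t, t < K → ε ≤ dist (v K t).1 (v K t).2 := by
    intro K t h
    simp only [hv, if_pos h]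
    exact hbad K t h
  -- extract convergent subsequence in the compact space ℕ → S × S
  obtain ⟨w, -, φ, hφ, hw⟩ := isCompact_univ.tendsto_subseq (x := v) (fun n => Set.mem_univ _)
  have hwt : ∀ t, Tendsto (fun k => v (φ k) t) atTop (𝓝 (w t)) := by
    intro t
    have := (tendsto_pi_nhds.1 hw) t
    exact this
  have hw1 : ∀ t, (w t).1 ≤ (w t).2 := fun t =>
    le_of_tendsto_pair hclosed ((continuous_fst.tendsto _).comp (hwt t))
      ((continuous_snd.tendsto _).comp (hwt t)) (Eventually.of_forall fun k => h1 _ _)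
  have hw2 : ∀ t, (w t).2 ≤ (w (t + 1)).1 := fun t =>
    le_of_tendsto_pair hclosed ((continuous_snd.tendsto _).comp (hwt t))
      ((continuous_fst.tendsto _).comp (hwt (t + 1))) (Eventually.of_forall fun k => h2 _ _)
  have hw3 : ∀ t, ε ≤ dist (w t).1 (w t).2 := by
    intro t
    have hd : Tendsto (fun k => dist (v (φ k) t).1 (v (φ k) t).2) atTop
        (𝓝 (dist (w t).1 (w t).2)) := by
      exact (Continuous.dist continuous_fst continuous_snd).continuousAt.tendsto.comp (hwt t)
    refine ge_of_tendsto hd ?_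
    filter_upwards [eventually_gt_atTop t] with k hk
    exact h3 _ _ (hk.trans_le hφ.le_apply)
  -- interleave
  set y : ℕ → S := fun n => if n % 2 = 0 then (w (n / 2)).1 else (w (n / 2)).2 with hy
  have hym : Monotone y := by
    apply monotone_nat_of_le_succ
    intro n
    rcases Nat.even_or_odd n with h | h
    · have h0 : n % 2 = 0 := Nat.even_iff.1 h
      have h1' : (n + 1) % 2 = 1 := by omega
      have : (n + 1) / 2 = n / 2 := by omega
      simp only [hy, h0, h1', if_pos rfl]
      rw [this]
      simp only [Nat.one_ne_zero, if_false]
      exact hw1 _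
    · have h0 : n % 2 = 1 := Nat.odd_iff.1 h
      have h1' : (n + 1) % 2 = 0 := by omega
      have : (n + 1) / 2 = n / 2 + 1 := by omega
      simp only [hy, h0, h1', if_pos rfl, Nat.one_ne_zero, if_false, this]
      exact hw2 _
  obtain ⟨l, hl⟩ := mono_tendsto hclosed hym
  have t1 : Tendsto (fun t => (w t).1) atTop (𝓝 l) := by
    have : (fun t => (w t).1) = y ∘ (fun t => 2 * t) := by
      funext t; simp [hy, Nat.mul_div_cancel_left _ (by norm_num : (0:ℕ) < 2), Nat.mul_mod_right]
    rw [this]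
    refine hl.comp (tendsto_atTop_atTop_of_monotone (fun x y h => by omega) (fun c => ⟨c, by omega⟩))
  have t2 : Tendsto (fun t => (w t).2) atTop (𝓝 l) := by
    have : (fun t => (w t).2) = y ∘ (fun t => 2 * t + 1) := by
      funext t
      have e1 : (2 * t + 1) % 2 = 1 := by omega
      have e2 : (2 * t + 1) / 2 = t := by omega
      simp [hy, e1, e2]
    rw [this]
    refine hl.comp (tendsto_atTop_atTop_of_monotone (fun x y h => by omega) (fun c => ⟨c, by omega⟩))
  have : Tendsto (fun t => dist (w t).1 (w t).2) atTop (𝓝 (dist l l)) := t1.dist t2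
  rw [dist_self] at this
  have := ge_of_tendsto this (Eventually.of_forall hw3)
  linarith

end Topo


section helper
variable {α : Type*} [MeasurableSpace α] {μ : Measure α} [IsProbabilityMeasure μ]

lemma ae_eq_one_of_lintegral_eq_one {f : α → ℝ≥0∞} (hf : Measurable f) (hle : ∀ x, f x ≤ 1)
    (h : ∫⁻ x, f x ∂μ = 1) : ∀ᵐ x ∂μ, f x = 1 := by
  have h2 : ∫⁻ x, (1 - f x) ∂μ = 0 := by
    rw [lintegral_sub hf (by rw [h]; exact ENNReal.one_ne_top) (Filter.Eventually.of_forall hle)]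
    simp [h]
  rw [lintegral_eq_zero_iff (f := fun x => 1 - f x) (measurable_const.sub hf)] at h2
  filter_upwards [h2] with x hx
  simp only [Pi.zero_apply] at hx
  exact le_antisymm (hle x) (tsub_eq_zero_iff_le.mp hx)

lemma meas_eq_one_of_ae {s : Set α} (hs : MeasurableSet s) (h : ∀ᵐ x ∂μ, x ∈ s) : μ s = 1 := by
  rw [← prob_compl_eq_zero_iff hs]
  rw [ae_iff] at h
  simpa [Set.compl_def] using h

lemma ae_of_meas_eq_one {s : Set α} (hs : MeasurableSet s) (h : μ s = 1) : ∀ᵐ x ∂μ, x ∈ s := by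
  rw [ae_iff]
  have := (prob_compl_eq_zero_iff hs).2 h
  simpa [Set.compl_def] using this
end helper

section Chain
variable {S : Type*} [MetricSpace S] [CompactSpace S] [PartialOrder S]
  [MeasurableSpace S] [BorelSpace S] [Nonempty S]

set_option linter.unusedSectionVars false

/-- truncation of a sequence -/
def trunc (N : ℕ) : (ℕ → S) → (ℕ → S) := fun ω i => ω (min i N)

lemma measurable_trunc (N : ℕ) : Measurable (trunc (S := S) N) :=
  measurable_pi_lambda _ (fun _ => measurable_pi_apply _)

/-- extension map -/
def ext1 (N : ℕ) : ((ℕ → S) × S) → (ℕ → S) := fun q i => if i ≤ N then q.1 i else q.2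

lemma measurable_ext1 (N : ℕ) : Measurable (ext1 (S := S) N) := by
  apply measurable_pi_lambda
  intro i
  by_cases h : i ≤ N
  · simp only [ext1, if_pos h]
    exact (measurable_pi_apply i).comp measurable_fst
  · simpa [ext1, h] using measurable_snd

/-- bundle of hypotheses on the couplings -/
structure ChainHyp (lam : ℕ → Measure (S × S)) (μ : ℕ → Measure S) : Prop where
  prob : ∀ n, IsProbabilityMeasure (lam n)
  fst : ∀ n, (lam n).map Prod.fst = μ n
  snd : ∀ n, (lam n).map Prod.snd = μ (n + 1)
  le : ∀ n, lam n {p : S × S | p.1 ≤ p.2} = 1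

variable {lam : ℕ → Measure (S × S)} {μ : ℕ → Measure S}

/-- the conditional kernel of the coupling -/
noncomputable def ck (H : ChainHyp lam μ) (n : ℕ) : Kernel S S :=
  haveI := H.prob n
  (lam n).condKernel

lemma ck_markov (H : ChainHyp lam μ) (n : ℕ) : IsMarkovKernel (ck H n) := by
  haveI := H.prob n
  unfold ck
  infer_instance

/-- the finite Markov chain measure, padded to live on `ℕ → S` -/
noncomputable def QQ (H : ChainHyp lam μ) : ℕ → Measure (ℕ → S)
  | 0 => (μ 0).map (fun x _ => x)
  | (N + 1) =>
      ((QQ H N).compProd ((ck H N).comap (fun ω => ω N) (measurable_pi_apply N))).map (ext1 N)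

variable (H : ChainHyp lam μ) (hclosed : IsClosed {p : S × S | p.1 ≤ p.2})
include H hclosed

lemma mu_prob (n : ℕ) : IsProbabilityMeasure (μ n) := by
  haveI := H.prob n
  rw [← H.fst n]
  exact Measure.isProbabilityMeasure_map measurable_fst.aemeasurable

lemma Q_prob : ∀ N, IsProbabilityMeasure (QQ H N) := by
  intro N
  induction N with
  | zero =>
      haveI := mu_prob H hclosed 0
      exact Measure.isProbabilityMeasure_map
        (measurable_pi_lambda _ (fun _ => measurable_id)).aemeasurable
  | succ N IH =>
      haveI := IH
      haveI := ck_markov H N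
      exact Measure.isProbabilityMeasure_map (measurable_ext1 N).aemeasurable

omit H hclosed in
lemma compProd_comap_snd {α β γ : Type*} [MeasurableSpace α] [MeasurableSpace β]
    [MeasurableSpace γ] (ν : Measure α) [IsProbabilityMeasure ν] (κ : Kernel β γ)
    [IsMarkovKernel κ] (g : α → β) (hg : Measurable g) :
    (ν.compProd (κ.comap g hg)).map Prod.snd = ((ν.map g).compProd κ).map Prod.snd := by
  haveI : IsProbabilityMeasure (ν.map g) := Measure.isProbabilityMeasure_map hg.aemeasurable
  ext s hs
  rw [Measure.map_apply measurable_snd hs, Measure.map_apply measurable_snd hs,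
    Measure.compProd_apply (measurable_snd hs), Measure.compProd_apply (measurable_snd hs)]
  have h1 : ∀ a : α, (κ.comap g hg) a (Prod.mk a ⁻¹' (Prod.snd ⁻¹' s)) = κ (g a) s := by
    intro a
    rw [Kernel.comap_apply]
    rfl
  have h2 : ∀ b : β, κ b (Prod.mk b ⁻¹' (Prod.snd ⁻¹' s)) = κ b s := fun b => rfl
  simp_rw [h1, h2]
  exact (lintegral_map (κ.measurable_coe hs) hg).symm

lemma Q_eval_last : ∀ N, (QQ H N).map (fun ω => ω N) = μ N := by
  intro N
  induction N with
  | zero =>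
      have hmm := Measure.map_map (μ := μ 0) (measurable_pi_apply 0)
        (show Measurable (fun (x : S) (_ : ℕ) => x) from
          measurable_pi_lambda _ fun _ => measurable_id)
      rw [QQ, hmm]
      simp [Function.comp_def]
  | succ N IH =>
      haveI := Q_prob H hclosed N
      haveI := ck_markov H N
      haveI := H.prob N
      have hcomp : (fun ω : ℕ → S => ω (N + 1)) ∘ ext1 N = Prod.snd := by
        funext q
        simp [ext1]
      rw [QQ, Measure.map_map (measurable_pi_apply (N + 1)) (measurable_ext1 N), hcomp,
        compProd_comap_snd _ _ _ (measurable_pi_apply N), IH]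
      have hfst' : μ N = (lam N).fst := (H.fst N).symm
      rw [hfst']
      show ((lam N).fst.compProd (ck H N)).map Prod.snd = μ (N + 1)
      have hd : (lam N).fst.compProd (ck H N) = lam N := by
        unfold ck
        exact (lam N).disintegrate _
      rw [hd]
      exact H.snd N

/-- the good event -/
def good (N : ℕ) : Set (ℕ → S) := {ω | Monotone ω ∧ ∀ i, N ≤ i → ω i = ω N}

lemma isClosed_good (N : ℕ) : IsClosed (good (S := S) N) := by
  have hg : good (S := S) N =
      ({ω : ℕ → S | Monotone ω} ∩ {ω : ℕ → S | ∀ i, N ≤ i → ω i = ω N}) := rfl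
  rw [hg]
  apply IsClosed.inter
  · have h1 : {ω : ℕ → S | Monotone ω} =
        ⋂ (i : ℕ), ⋂ (j : ℕ), ⋂ (_ : i ≤ j), {ω : ℕ → S | ω i ≤ ω j} := by
      ext ω
      simp only [Set.mem_setOf_eq, Set.mem_iInter]
      exact ⟨fun h i j hij => h hij, fun h a b hab => h a b hab⟩
    rw [h1]
    refine isClosed_iInter (fun i => isClosed_iInter (fun j => isClosed_iInter (fun _ => ?_)))
    show IsClosed ((fun ω : ℕ → S => (ω i, ω j)) ⁻¹' {p : S × S | p.1 ≤ p.2})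
    exact IsClosed.preimage ((continuous_apply i).prodMk (continuous_apply j)) hclosed
  · have h2 : {ω : ℕ → S | ∀ i, N ≤ i → ω i = ω N} =
        ⋂ (i : ℕ), ⋂ (_ : N ≤ i), {ω : ℕ → S | ω i = ω N} := by
      ext ω
      simp
    rw [h2]
    exact isClosed_iInter fun i => isClosed_iInter fun _ =>
      isClosed_eq (continuous_apply i) (continuous_apply N)

lemma condk_up (n : ℕ) : ∀ᵐ x ∂((lam n).map Prod.fst), (ck H n) x {y | x ≤ y} = 1 := by
  haveI := H.prob n
  haveI : IsProbabilityMeasure ((lam n).map Prod.fst) :=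
    Measure.isProbabilityMeasure_map measurable_fst.aemeasurable
  haveI := ck_markov H n
  have hd : (lam n).fst.compProd (ck H n) = lam n := by
    unfold ck; exact (lam n).disintegrate _
  have h1 : ∫⁻ x, (ck H n) x {y | x ≤ y} ∂((lam n).map Prod.fst) = 1 := by
    have h2 := H.le n
    conv_lhs at h2 => rw [← hd]
    rw [Measure.compProd_apply hclosed.measurableSet] at h2
    exact h2
  have hmeas : Measurable (fun x : S => (ck H n) x {y : S | x ≤ y}) :=
    Kernel.measurable_kernel_prodMk_left (κ := ck H n) hclosed.measurableSet
  exact ae_eq_one_of_lintegral_eq_one hmeas (fun x => prob_le_one) h1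

lemma measurable_upk (n : ℕ) :
    MeasurableSet {x : S | (ck H n) x {y : S | x ≤ y} = 1} := by
  have hmeas : Measurable (fun x : S => (ck H n) x {y : S | x ≤ y}) :=
    haveI := ck_markov H n
    Kernel.measurable_kernel_prodMk_left (κ := ck H n) hclosed.measurableSet
  exact hmeas (measurableSet_singleton 1)

lemma Q_good : ∀ N, QQ H N (good N) = 1 := by
  intro N
  induction N with
  | zero =>
      haveI := mu_prob H hclosed 0
      rw [QQ, Measure.map_apply (show Measurable (fun (x : S) (_ : ℕ) => x) from
        measurable_pi_lambda _ fun _ => measurable_id)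
        (isClosed_good H hclosed 0).measurableSet]
      have h0 : (fun (x : S) (_ : ℕ) => x) ⁻¹' (good 0) = Set.univ := by
        ext x
        simp [good, monotone_const]
      rw [h0]
      exact measure_univ
  | succ N IH =>
      haveI := Q_prob H hclosed N
      haveI := ck_markov H N
      set κ := (ck H N).comap (fun ω : ℕ → S => ω N) (measurable_pi_apply N) with hκ
      haveI : IsMarkovKernel κ := by rw [hκ]; infer_instance
      rw [QQ, Measure.map_apply (measurable_ext1 N) (isClosed_good H hclosed (N + 1)).measurableSet]
      haveI : IsProbabilityMeasure ((QQ H N).compProd κ) := by infer_instance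
      apply meas_eq_one_of_ae
        ((isClosed_good H hclosed (N + 1)).measurableSet.preimage (measurable_ext1 N))
      apply Measure.ae_compProd_of_ae_ae
        ((isClosed_good H hclosed (N + 1)).measurableSet.preimage (measurable_ext1 N))
      have ha : ∀ᵐ a ∂(QQ H N), a ∈ good N :=
        ae_of_meas_eq_one (isClosed_good H hclosed N).measurableSet IH
      have hup : ∀ᵐ a ∂(QQ H N), (ck H N) (a N) {y | a N ≤ y} = 1 := by
        have hm : (QQ H N).map (fun ω => ω N) = (lam N).map Prod.fst :=
          (Q_eval_last H hclosed N).trans (H.fst N).symm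
        have h0 := condk_up H hclosed N
        rw [← hm] at h0
        exact (ae_map_iff (measurable_pi_apply N).aemeasurable
          (measurable_upk H hclosed N)).1 h0
      filter_upwards [ha, hup] with a hag hak
      simp only [good, Set.mem_setOf_eq] at hag
      have hκa : κ a = (ck H N) (a N) := Kernel.comap_apply _ _ _
      have hy : ∀ᵐ y ∂(κ a), a N ≤ y := by
        rw [hκa]
        haveI : IsProbabilityMeasure ((ck H N) (a N)) := by
          haveI := ck_markov H N
          infer_instance
        exact ae_of_meas_eq_one (hclosed.measurableSet.preimage measurable_prodMk_left) hak
      filter_upwards [hy] with y hyy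
      simp only [Set.mem_preimage, good, Set.mem_setOf_eq]
      constructor
      · intro i j hij
        by_cases hj : j ≤ N
        · have hi : i ≤ N := hij.trans hj
          simpa [ext1, hi, hj] using hag.1 hij
        · by_cases hi : i ≤ N
          · simp only [ext1, if_pos hi, if_neg hj]
            exact (hag.1 hi).trans hyy
          · simp [ext1, hi, hj]
      · intro i hi
        have h1 : ¬ i ≤ N := by omega
        have h2 : ¬ N + 1 ≤ N := by omega
        simp [ext1, h1, h2]

lemma Q_trunc : ∀ N M, N ≤ M → (QQ H M).map (trunc N) = QQ H N := by
  intro N M h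
  induction M, h using Nat.le_induction with
  | base =>
      haveI := Q_prob H hclosed N
      have hae : trunc N =ᵐ[QQ H N] id := by
        filter_upwards [ae_of_meas_eq_one (μ := QQ H N)
          (isClosed_good H hclosed N).measurableSet (Q_good H hclosed N)] with ω hω
        simp only [good, Set.mem_setOf_eq] at hω
        funext i
        by_cases hi : i ≤ N
        · simp [trunc, min_eq_left hi]
        · have hmin : min i N = N := min_eq_right (by omega)
          simp only [trunc, id_eq, hmin]
          exact (hω.2 i (by omega)).symm
      rw [Measure.map_congr hae, Measure.map_id]
  | succ M hNM IH =>
      haveI := Q_prob H hclosed M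
      haveI := ck_markov H M
      have hcomp : trunc N ∘ ext1 M = trunc N ∘ (Prod.fst : (ℕ → S) × S → (ℕ → S)) := by
        funext q
        funext i
        have hmin : min i N ≤ M := le_trans (min_le_right _ _) hNM
        simp [trunc, ext1, Function.comp, hmin]
      rw [show QQ H (M + 1) = ((QQ H M).compProd ((ck H M).comap
            (fun ω => ω M) (measurable_pi_apply M))).map (ext1 M) from rfl,
        Measure.map_map (measurable_trunc N) (measurable_ext1 M), hcomp,
        ← Measure.map_map (measurable_trunc N) measurable_fst]
      have hfst : ((QQ H M).compProd ((ck H M).comap (fun ω => ω M)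
          (measurable_pi_apply M))).map Prod.fst = QQ H M :=
        Measure.fst_compProd _ _
      rw [hfst, IH]

lemma Q_eval (n N : ℕ) (h : n ≤ N) : (QQ H N).map (fun ω => ω n) = μ n := by
  have hcomp : (fun ω : ℕ → S => ω n) = (fun ω : ℕ → S => ω n) ∘ trunc n := by
    funext ω
    simp [trunc]
  rw [hcomp, ← Measure.map_map (measurable_pi_apply n) (measurable_trunc n),
    Q_trunc H hclosed n N h, Q_eval_last H hclosed n]

lemma Q_event (n m N : ℕ) (hnm : n ≤ m) (h : m ≤ N) {A : Set (ℕ → S)} (hA : MeasurableSet A)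
    (hinv : trunc m ⁻¹' A = A) : QQ H N A = QQ H m A := by
  conv_lhs => rw [← hinv]
  rw [← Measure.map_apply (measurable_trunc m) hA, Q_trunc H hclosed m N h]

end Chain

section Count
variable {S : Type*} [MetricSpace S] [CompactSpace S] [PartialOrder S]
  [MeasurableSpace S] [BorelSpace S] [Nonempty S]
set_option linter.unusedSectionVars false

lemma isClosed_monoSet (hclosed : IsClosed {p : S × S | p.1 ≤ p.2}) :
    IsClosed {ω : ℕ → S | Monotone ω} := by
  have h1 : {ω : ℕ → S | Monotone ω} =
      ⋂ (i : ℕ), ⋂ (j : ℕ), ⋂ (_ : i ≤ j), {ω : ℕ → S | ω i ≤ ω j} := by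
    ext ω
    simp only [Set.mem_setOf_eq, Set.mem_iInter]
    exact ⟨fun h i j hij => h hij, fun h a b hab => h a b hab⟩
  rw [h1]
  refine isClosed_iInter (fun i => isClosed_iInter (fun j => isClosed_iInter (fun _ => ?_)))
  show IsClosed ((fun ω : ℕ → S => (ω i, ω j)) ⁻¹' {p : S × S | p.1 ≤ p.2})
  exact IsClosed.preimage ((continuous_apply i).prodMk (continuous_apply j)) hclosed

lemma measurable_distSet {ε : ℝ} (n m : ℕ) :
    MeasurableSet {ω : ℕ → S | ε ≤ dist (ω n) (ω m)} := by
  have hc : Continuous fun ω : ℕ → S => dist (ω n) (ω m) :=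
    Continuous.dist (continuous_apply _) (continuous_apply _)
  exact (isClosed_le continuous_const hc).measurableSet

lemma count_bound (hclosed : IsClosed {p : S × S | p.1 ≤ p.2})
    (P : Measure (ℕ → S)) [IsProbabilityMeasure P]
    (hP : P {ω : ℕ → S | Monotone ω} = 1) {ε : ℝ} {K : ℕ}
    (hK : ∀ z : ℕ → S, Monotone z → ∀ a b : ℕ → ℕ, (∀ t, a t ≤ b t) →
      (∀ t, b t ≤ a (t + 1)) → ∃ t < K, dist (z (a t)) (z (b t)) < ε)
    (T : ℕ) (a b : ℕ → ℕ) (hab : ∀ t, a t ≤ b t) (hba : ∀ t, b t ≤ a (t + 1)) :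
    ∑ t ∈ Finset.range T, P {ω : ℕ → S | ε ≤ dist (ω (a t)) (ω (b t))} ≤ K := by
  classical
  set A : ℕ → Set (ℕ → S) := fun t => {ω | ε ≤ dist (ω (a t)) (ω (b t))} with hA
  have hAm : ∀ t, MeasurableSet (A t) := fun t => measurable_distSet _ _
  have hsum : ∀ t, P (A t) = ∫⁻ ω, (A t).indicator (fun _ => (1 : ℝ≥0∞)) ω ∂P := by
    intro t
    rw [lintegral_indicator (hAm t), setLIntegral_one]
  change ∑ t ∈ Finset.range T, P (A t) ≤ K
  simp_rw [hsum]
  have hswap := lintegral_finset_sum (μ := P) (Finset.range T)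
    (f := fun t => (A t).indicator (fun _ => (1 : ℝ≥0∞)))
    (fun t _ => measurable_one.indicator (hAm t))
  rw [← hswap]
  have hbound : ∀ᵐ ω ∂P,
      (∑ t ∈ Finset.range T, (A t).indicator (fun _ => (1 : ℝ≥0∞)) ω) ≤ (K : ℝ≥0∞) := by
    filter_upwards [ae_of_meas_eq_one (isClosed_monoSet hclosed).measurableSet hP] with ω hω
    have hcard : (∑ t ∈ Finset.range T, (A t).indicator (fun _ => (1 : ℝ≥0∞)) ω)
        = ((Finset.range T).filter (fun t => ω ∈ A t)).card := by
      rw [Finset.sum_congr rfl (fun t _ => Set.indicator_apply _ _ _)]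
      exact Finset.sum_boole _ _
    rw [hcard]
    rw [Nat.cast_le]
    by_contra hlt
    push_neg at hlt
    obtain ⟨s, hs_sub, hs_card⟩ :=
      Finset.exists_subset_card_eq (le_of_lt hlt)
    set e := s.orderEmbOfFin hs_card with he
    by_cases hK0 : K = 0
    · obtain ⟨t, ht, -⟩ := hK ω hω (fun _ => 0) (fun _ => 0) (fun _ => le_refl _)
        (fun _ => le_refl _)
      omega
    · set c := b (e ⟨K - 1, by omega⟩) with hc
      set a' : ℕ → ℕ := fun t => if h : t < K then a (e ⟨t, h⟩) else c with ha'
      set b' : ℕ → ℕ := fun t => if h : t < K then b (e ⟨t, h⟩) else c with hb'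
      have amono : Monotone a := monotone_nat_of_le_succ fun t => (hab t).trans (hba t)
      have haux : ∀ i j, i < j → b i ≤ a j := fun i j hij => (hba i).trans (amono hij)
      have h1' : ∀ t, a' t ≤ b' t := by
        intro t
        by_cases h : t < K
        · simp only [ha', hb', dif_pos h]
          exact hab _
        · simp [ha', hb', dif_neg h]
      have h2' : ∀ t, b' t ≤ a' (t + 1) := by
        intro t
        by_cases h : t + 1 < K
        · have ht : t < K := by omega
          simp only [ha', hb', dif_pos h, dif_pos ht]
          exact haux _ _ (e.strictMono (by simp [Fin.mk_lt_mk]))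
        · by_cases ht : t < K
          · simp only [ha', hb', dif_pos ht, dif_neg h]
            have heq : (⟨t, ht⟩ : Fin K) = ⟨K - 1, by omega⟩ := by
              apply Fin.ext
              simp only
              omega
            rw [heq]
          · simp [ha', hb', dif_neg ht, dif_neg h]
      obtain ⟨t, htK, hdist⟩ := hK ω hω a' b' h1' h2'
      have hmem : e ⟨t, htK⟩ ∈ s := Finset.orderEmbOfFin_mem s hs_card _
      have hbad : ω ∈ A (e ⟨t, htK⟩) := (Finset.mem_filter.1 (hs_sub hmem)).2
      simp only [ha', hb', dif_pos htK] at hdist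
      simp only [hA, Set.mem_setOf_eq] at hbad
      linarith
  calc ∫⁻ ω, (∑ t ∈ Finset.range T, (A t).indicator (fun _ => (1 : ℝ≥0∞)) ω) ∂P
      ≤ ∫⁻ _, (K : ℝ≥0∞) ∂P := lintegral_mono_ae hbound
    _ = K := by simp

end Count

section KQL
variable {S : Type*} [MetricSpace S] [CompactSpace S] [PartialOrder S]
  [MeasurableSpace S] [BorelSpace S] [Nonempty S]
  {lam : ℕ → Measure (S × S)} {μ : ℕ → Measure S}
  (H : ChainHyp lam μ) (hclosed : IsClosed {p : S × S | p.1 ≤ p.2})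
include H hclosed
set_option linter.unusedSectionVars false

lemma Q_mono_one (M : ℕ) : QQ H M {ω : ℕ → S | Monotone ω} = 1 := by
  haveI := Q_prob H hclosed M
  refine le_antisymm prob_le_one ?_
  calc (1 : ℝ≥0∞) = QQ H M (good M) := (Q_good H hclosed M).symm
    _ ≤ QQ H M {ω : ℕ → S | Monotone ω} := measure_mono (fun ω hω => hω.1)

lemma kql (ε : ℝ) (hε : 0 < ε) (η : ℝ≥0∞) (hη : η ≠ 0) :
    ∃ n₀ : ℕ, ∀ n m, n₀ ≤ n → n < m →
      QQ H m {ω : ℕ → S | ε ≤ dist (ω n) (ω m)} ≤ η := by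
  obtain ⟨K, hK⟩ := gap_bound hclosed ε hε
  by_contra hcon
  push_neg at hcon
  choose f g hf hfg hbig using hcon
  set p : ℕ → ℕ × ℕ := fun t => Nat.rec (f 0, g 0) (fun _ q => (f q.2, g q.2)) t with hp
  set a : ℕ → ℕ := fun t => (p t).1 with ha
  set b : ℕ → ℕ := fun t => (p t).2 with hb
  have hex : ∀ t, ∃ x, p t = (f x, g x) := by
    intro t
    cases t with
    | zero => exact ⟨0, rfl⟩
    | succ t => exact ⟨(p t).2, rfl⟩
  have hab : ∀ t, a t ≤ b t := by
    intro t
    obtain ⟨x, hx⟩ := hex t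
    simp only [ha, hb, hx]
    exact (hfg x).le
  have hba : ∀ t, b t ≤ a (t + 1) := by
    intro t
    have : a (t + 1) = f (b t) := rfl
    rw [this]
    exact hf (b t)
  have hbmono : Monotone b := monotone_nat_of_le_succ fun t => (hba t).trans (hab (t + 1))
  have hbig' : ∀ t, η < QQ H (b t) {ω : ℕ → S | ε ≤ dist (ω (a t)) (ω (b t))} := by
    intro t
    obtain ⟨x, hx⟩ := hex t
    have h1 : a t = f x := by simp [ha, hx]
    have h2 : b t = g x := by simp [hb, hx]
    rw [h1, h2]
    exact hbig x
  have habs : ∀ t, a t < b t := by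
    intro t
    obtain ⟨x, hx⟩ := hex t
    have h1 : a t = f x := by simp [ha, hx]
    have h2 : b t = g x := by simp [hb, hx]
    rw [h1, h2]
    exact hfg x
  obtain ⟨T, hT⟩ : ∃ T : ℕ, (K : ℝ≥0∞) < T * η := by
    rcases eq_or_ne η ⊤ with h | h
    · refine ⟨K + 1, ?_⟩
      rw [h, ENNReal.mul_top (by exact_mod_cast Nat.succ_ne_zero K)]
      exact ENNReal.natCast_lt_top K
    · have hη0 : 0 < η.toNNReal := ENNReal.toNNReal_pos hη h
      obtain ⟨T, hT⟩ := exists_nat_gt ((K : ℝ) / (η.toNNReal : ℝ))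
      refine ⟨T, ?_⟩
      have hKT : (K : ℝ) < T * (η.toNNReal : ℝ) := by
        rw [div_lt_iff₀ (by exact_mod_cast hη0)] at hT
        linarith
      have : (K : ℝ≥0∞) < ENNReal.ofReal (T * (η.toNNReal : ℝ)) := by
        rw [← ENNReal.ofReal_natCast K]
        exact (ENNReal.ofReal_lt_ofReal_iff ((Nat.cast_nonneg K).trans_lt hKT)).2 hKT
      calc (K : ℝ≥0∞) < ENNReal.ofReal (T * (η.toNNReal : ℝ)) := this
        _ = T * η := by
            rw [ENNReal.ofReal_mul (by positivity), ENNReal.ofReal_natCast,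
              ENNReal.ofReal_coe_nnreal, ENNReal.coe_toNNReal h]
  set M := b T with hM
  haveI := Q_prob H hclosed M
  have hQm : ∀ t, t < T → η < QQ H M {ω : ℕ → S | ε ≤ dist (ω (a t)) (ω (b t))} := by
    intro t ht
    have hinv : trunc (b t) ⁻¹' {ω : ℕ → S | ε ≤ dist (ω (a t)) (ω (b t))}
        = {ω : ℕ → S | ε ≤ dist (ω (a t)) (ω (b t))} := by
      ext ω
      simp [trunc, min_eq_left (hab t), min_self]
    rw [Q_event H hclosed (a t) (b t) M (hab t) (hbmono ht.le) (measurable_distSet _ _) hinv]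
    exact hbig' t
  have hcount := count_bound hclosed (QQ H M) (Q_mono_one H hclosed M) hK T a b hab hba
  have hlower : (T : ℝ≥0∞) * η ≤ ∑ t ∈ Finset.range T,
      QQ H M {ω : ℕ → S | ε ≤ dist (ω (a t)) (ω (b t))} := by
    have := Finset.card_nsmul_le_sum (Finset.range T)
      (fun t => QQ H M {ω : ℕ → S | ε ≤ dist (ω (a t)) (ω (b t))}) η
      (fun t ht => (hQm t (Finset.mem_range.1 ht)).le)
    simpa [Finset.card_range, nsmul_eq_mul] using this
  exact absurd (hlower.trans hcount) (not_le.2 hT)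

/-- key comparison estimate between the marginals -/
lemma compare (ε : ℝ) (hε : 0 < ε) :
    ∃ n₀ : ℕ, ∀ n m, n₀ ≤ n → n₀ ≤ m → ∀ B : Set S, MeasurableSet B →
      μ m B ≤ μ n (Metric.thickening ε B) + ENNReal.ofReal ε := by
  obtain ⟨n₀, hn₀⟩ := kql H hclosed ε hε (ENNReal.ofReal ε) (ENNReal.ofReal_pos.2 hε).ne'
  refine ⟨n₀, fun n m hn hm B hB => ?_⟩
  rcases lt_trichotomy n m with hlt | heq | hgt
  · -- n < m : use the chain measure QQ H m
    haveI := Q_prob H hclosed m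
    have hm1 : μ m B = QQ H m ((fun ω : ℕ → S => ω m) ⁻¹' B) := by
      rw [← Q_eval H hclosed m m le_rfl, Measure.map_apply (measurable_pi_apply m) hB]
    have hn1 : μ n (Metric.thickening ε B)
        = QQ H m ((fun ω : ℕ → S => ω n) ⁻¹' (Metric.thickening ε B)) := by
      rw [← Q_eval H hclosed n m hlt.le,
        Measure.map_apply (measurable_pi_apply n) Metric.isOpen_thickening.measurableSet]
    rw [hm1, hn1]
    have hsub : (fun ω : ℕ → S => ω m) ⁻¹' B ⊆
        ((fun ω : ℕ → S => ω n) ⁻¹' (Metric.thickening ε B)) ∪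
          {ω : ℕ → S | ε ≤ dist (ω n) (ω m)} := by
      intro ω hω
      by_cases hd : ε ≤ dist (ω n) (ω m)
      · exact Or.inr hd
      · left
        exact Metric.mem_thickening_iff.2 ⟨ω m, hω, by linarith [not_le.1 hd]⟩
    calc QQ H m ((fun ω : ℕ → S => ω m) ⁻¹' B)
        ≤ QQ H m (((fun ω : ℕ → S => ω n) ⁻¹' (Metric.thickening ε B)) ∪
            {ω : ℕ → S | ε ≤ dist (ω n) (ω m)}) := measure_mono hsub
      _ ≤ QQ H m ((fun ω : ℕ → S => ω n) ⁻¹' (Metric.thickening ε B)) +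
            QQ H m {ω : ℕ → S | ε ≤ dist (ω n) (ω m)} := measure_union_le _ _
      _ ≤ QQ H m ((fun ω : ℕ → S => ω n) ⁻¹' (Metric.thickening ε B)) +
            ENNReal.ofReal ε := by
            gcongr
            exact hn₀ n m hn hlt
  · subst heq
    exact le_trans (measure_mono (Metric.self_subset_thickening hε B)) le_self_add
  · -- m < n : use the chain measure QQ H n
    haveI := Q_prob H hclosed n
    have hm1 : μ m B = QQ H n ((fun ω : ℕ → S => ω m) ⁻¹' B) := by
      rw [← Q_eval H hclosed m n hgt.le, Measure.map_apply (measurable_pi_apply m) hB]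
    have hn1 : μ n (Metric.thickening ε B)
        = QQ H n ((fun ω : ℕ → S => ω n) ⁻¹' (Metric.thickening ε B)) := by
      rw [← Q_eval H hclosed n n le_rfl,
        Measure.map_apply (measurable_pi_apply n) Metric.isOpen_thickening.measurableSet]
    rw [hm1, hn1]
    have hsub : (fun ω : ℕ → S => ω m) ⁻¹' B ⊆
        ((fun ω : ℕ → S => ω n) ⁻¹' (Metric.thickening ε B)) ∪
          {ω : ℕ → S | ε ≤ dist (ω m) (ω n)} := by
      intro ω hω
      by_cases hd : ε ≤ dist (ω m) (ω n)
      · exact Or.inr hd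
      · left
        refine Metric.mem_thickening_iff.2 ⟨ω m, hω, ?_⟩
        rw [dist_comm]
        linarith [not_le.1 hd]
    calc QQ H n ((fun ω : ℕ → S => ω m) ⁻¹' B)
        ≤ QQ H n (((fun ω : ℕ → S => ω n) ⁻¹' (Metric.thickening ε B)) ∪
            {ω : ℕ → S | ε ≤ dist (ω m) (ω n)}) := measure_mono hsub
      _ ≤ QQ H n ((fun ω : ℕ → S => ω n) ⁻¹' (Metric.thickening ε B)) +
            QQ H n {ω : ℕ → S | ε ≤ dist (ω m) (ω n)} := measure_union_le _ _
      _ ≤ QQ H n ((fun ω : ℕ → S => ω n) ⁻¹' (Metric.thickening ε B)) +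
            ENNReal.ofReal ε := by
            gcongr
            exact hn₀ m n hm hgt

end KQL


section LimsupHelpers

lemma ennreal_liminf_superadd (f g : ℕ → ℝ≥0∞) :
    liminf f atTop + liminf g atTop ≤ liminf (fun n => f n + g n) atTop := by
  rw [le_liminf_iff]
  intro b hb
  rcases eq_or_ne (liminf f atTop) 0 with h0 | h0
  · rw [h0, zero_add] at hb
    filter_upwards [eventually_lt_of_lt_liminf hb] with n hn
    exact hn.trans_le le_add_self
  · rcases eq_or_ne (liminf g atTop) 0 with h1 | h1
    · rw [h1, add_zero] at hb
      filter_upwards [eventually_lt_of_lt_liminf hb] with n hn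
      exact hn.trans_le le_self_add
    · obtain ⟨y, hy, z, hz, hbyz⟩ := ENNReal.exists_lt_add_of_lt_add hb h0 h1
      filter_upwards [eventually_lt_of_lt_liminf hy, eventually_lt_of_lt_liminf hz] with n h1' h2'
      exact hbyz.trans_le (add_le_add h1'.le h2'.le)

lemma ennreal_limsup_subadd (f g : ℕ → ℝ≥0∞) :
    limsup (fun n => f n + g n) atTop ≤ limsup f atTop + limsup g atTop := by
  rcases eq_or_ne (limsup f atTop) ⊤ with h0 | h0
  · rw [h0, top_add]; exact le_top
  rcases eq_or_ne (limsup g atTop) ⊤ with h1 | h1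
  · rw [h1, add_top]; exact le_top
  apply ENNReal.le_of_forall_pos_le_add
  intro ε hε _
  have hf : ∀ᶠ n in atTop, f n < limsup f atTop + (ε / 2 : ℝ≥0) :=
    eventually_lt_of_limsup_lt (ENNReal.lt_add_right h0 (by simpa using hε.ne'))
  have hg : ∀ᶠ n in atTop, g n < limsup g atTop + (ε / 2 : ℝ≥0) :=
    eventually_lt_of_limsup_lt (ENNReal.lt_add_right h1 (by simpa using hε.ne'))
  refine limsup_le_of_le (by isBoundedDefault) ?_
  filter_upwards [hf, hg] with n h1' h2'
  calc f n + g n ≤ (limsup f atTop + (ε / 2 : ℝ≥0)) + (limsup g atTop + (ε / 2 : ℝ≥0)) :=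
        add_le_add h1'.le h2'.le
    _ = limsup f atTop + limsup g atTop + ((ε / 2 : ℝ≥0) + (ε / 2 : ℝ≥0) : ℝ≥0∞) := by ring
    _ = limsup f atTop + limsup g atTop + (ε : ℝ≥0∞) := by
        congr 1
        rw [← ENNReal.coe_add]
        congr 1
        exact add_halves ε

lemma iInf_tail_of_antitone {f : ℕ → ℝ≥0∞} (hf : Antitone f) (j₀ : ℕ) :
    ⨅ j, f j = ⨅ j, f (j + j₀) := by
  apply le_antisymm
  · exact le_iInf fun j => iInf_le_of_le (j + j₀) le_rfl
  · exact le_iInf fun j => iInf_le_of_le j (hf (Nat.le_add_right j j₀))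

end LimsupHelpers

section Limit
variable {S : Type*} [MetricSpace S] [CompactSpace S] [MeasurableSpace S] [BorelSpace S]
variable (m : ℕ → Measure S)

/-- limsup of thickened measures -/
noncomputable def psiR (A : Set S) (ε : ℝ) : ℝ≥0∞ :=
  limsup (fun n => m n (Metric.thickening ε A)) atTop

/-- liminf of thickened measures -/
noncomputable def phiR (A : Set S) (ε : ℝ) : ℝ≥0∞ :=
  liminf (fun n => m n (Metric.thickening ε A)) atTop

/-- the candidate content value -/
noncomputable def cfun (A : Set S) : ℝ≥0∞ := ⨅ j : ℕ, psiR m A (1 / (j + 1))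

variable {m}
variable (hm : ∀ n, IsProbabilityMeasure (m n))
  (hcmp : ∀ ε : ℝ, 0 < ε → ∃ n₀ : ℕ, ∀ n k, n₀ ≤ n → n₀ ≤ k → ∀ B : Set S, MeasurableSet B →
    m k B ≤ m n (Metric.thickening ε B) + ENNReal.ofReal ε)
include hm hcmp
set_option linter.unusedSectionVars false

lemma psiR_le_one (A : Set S) (ε : ℝ) : psiR m A ε ≤ 1 := by
  refine limsup_le_of_le (by isBoundedDefault) (Eventually.of_forall fun n => ?_)
  haveI := hm n
  exact prob_le_one

lemma phiR_le_psiR (A : Set S) (ε : ℝ) : phiR m A ε ≤ psiR m A ε :=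
  liminf_le_limsup (by isBoundedDefault) (by isBoundedDefault)

lemma psiR_anti (A : Set S) {ε δ : ℝ} (h : ε ≤ δ) : psiR m A ε ≤ psiR m A δ :=
  limsup_le_limsup (Eventually.of_forall fun n =>
    measure_mono (Metric.thickening_mono h A))

lemma phiR_anti (A : Set S) {ε δ : ℝ} (h : ε ≤ δ) : phiR m A ε ≤ phiR m A δ :=
  liminf_le_liminf (Eventually.of_forall fun n =>
    measure_mono (Metric.thickening_mono h A))

lemma bridge (A : Set S) (ε δ : ℝ) (hε : 0 < ε) (hδ : 0 < δ) :
    psiR m A ε ≤ phiR m A (ε + δ) + ENNReal.ofReal δ := by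
  obtain ⟨n₀, h⟩ := hcmp δ hδ
  have key : ∀ n k, n₀ ≤ n → n₀ ≤ k →
      m k (Metric.thickening ε A) ≤ m n (Metric.thickening (ε + δ) A) + ENNReal.ofReal δ := by
    intro n k hn hk
    refine (h n k hn hk _ Metric.isOpen_thickening.measurableSet).trans ?_
    gcongr
    refine (Metric.thickening_thickening_subset δ ε A).trans ?_
    exact Metric.thickening_mono (by linarith) A
  have h1 : ∀ n, n₀ ≤ n →
      psiR m A ε ≤ m n (Metric.thickening (ε + δ) A) + ENNReal.ofReal δ := by
    intro n hn
    exact limsup_le_of_le (by isBoundedDefault)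
      (eventually_atTop.2 ⟨n₀, fun k hk => key n k hn hk⟩)
  by_cases hc : psiR m A ε ≤ ENNReal.ofReal δ
  · exact hc.trans le_add_self
  · have h2 : ∀ n, n₀ ≤ n → psiR m A ε - ENNReal.ofReal δ ≤ m n (Metric.thickening (ε + δ) A) :=
      fun n hn => tsub_le_iff_right.2 (h1 n hn)
    have h3 : psiR m A ε - ENNReal.ofReal δ ≤ phiR m A (ε + δ) :=
      le_liminf_of_le (by isBoundedDefault) (eventually_atTop.2 ⟨n₀, h2⟩)
    calc psiR m A ε = (psiR m A ε - ENNReal.ofReal δ) + ENNReal.ofReal δ :=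
          (tsub_add_cancel_of_le (le_of_not_ge hc)).symm
      _ ≤ phiR m A (ε + δ) + ENNReal.ofReal δ := by gcongr

lemma cfun_eq_phi (A : Set S) : cfun m A = ⨅ j : ℕ, phiR m A (1 / (j + 1)) := by
  apply le_antisymm
  · refine le_iInf fun j => ?_
    apply ENNReal.le_of_forall_pos_le_add
    intro η hη hfin
    have hεj : (0 : ℝ) < 1 / (j + 1) := by positivity
    set δ : ℝ := min (1 / (j + 1) / 2) (η : ℝ) with hδdef
    have hδpos : 0 < δ := lt_min (by positivity) (by exact_mod_cast hη)
    obtain ⟨j', hj'⟩ := exists_nat_one_div_lt (show (0:ℝ) < 1 / (j + 1) - δ by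
      have : δ ≤ 1 / (j + 1) / 2 := min_le_left _ _
      linarith)
    have hle : (1 : ℝ) / (j' + 1) + δ ≤ 1 / (j + 1) := by linarith
    calc cfun m A ≤ psiR m A (1 / (j' + 1)) := iInf_le _ j'
      _ ≤ phiR m A (1 / (j' + 1) + δ) + ENNReal.ofReal δ :=
          bridge hm hcmp A _ δ (by positivity) hδpos
      _ ≤ phiR m A (1 / (j + 1)) + ENNReal.ofReal δ := by
          gcongr
          exact phiR_anti hm hcmp A hle
      _ ≤ phiR m A (1 / (j + 1)) + η := by
          gcongr
          calc ENNReal.ofReal δ ≤ ENNReal.ofReal (η : ℝ) :=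
                ENNReal.ofReal_le_ofReal (min_le_right _ _)
            _ = (η : ℝ≥0∞) := ENNReal.ofReal_coe_nnreal
  · exact le_iInf fun j => (iInf_le _ j).trans (phiR_le_psiR hm hcmp A _)

lemma cfun_le_one (A : Set S) : cfun m A ≤ 1 :=
  (iInf_le _ 0).trans (psiR_le_one hm hcmp A _)

lemma cfun_ne_top (A : Set S) : cfun m A ≠ ⊤ :=
  ((cfun_le_one hm hcmp A).trans_lt ENNReal.one_lt_top).ne

lemma cfun_mono {A B : Set S} (h : A ⊆ B) : cfun m A ≤ cfun m B :=
  le_iInf fun j => (iInf_le _ j).trans (limsup_le_limsup (Eventually.of_forall fun n =>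
    measure_mono (Metric.thickening_subset_of_subset _ h)))

lemma cfun_union_le (A B : Set S) : cfun m (A ∪ B) ≤ cfun m A + cfun m B := by
  have hrw : cfun m A + cfun m B = ⨅ j : ℕ, (psiR m A (1 / (j + 1)) + psiR m B (1 / (j + 1))) := by
    apply ENNReal.iInf_add_iInf
    intro i j
    refine ⟨max i j, add_le_add ?_ ?_⟩
    · apply psiR_anti hm hcmp
      have : (i : ℝ) ≤ max i j := by exact_mod_cast le_max_left i j
      rw [div_le_div_iff₀ (by positivity) (by positivity)]
      nlinarith
    · apply psiR_anti hm hcmp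
      have : (j : ℝ) ≤ max i j := by exact_mod_cast le_max_right i j
      rw [div_le_div_iff₀ (by positivity) (by positivity)]
      nlinarith
  rw [hrw]
  refine le_iInf fun j => (iInf_le _ j).trans ?_
  calc psiR m (A ∪ B) (1 / (j + 1))
      ≤ limsup (fun n => m n (Metric.thickening (1 / (j + 1)) A)
          + m n (Metric.thickening (1 / (j + 1)) B)) atTop := by
        apply limsup_le_limsup (Eventually.of_forall fun n => ?_)
        rw [Metric.thickening_union]
        exact measure_union_le _ _
    _ ≤ psiR m A (1 / (j + 1)) + psiR m B (1 / (j + 1)) := ennreal_limsup_subadd _ _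

lemma cfun_union_disjoint {A B : Set S} (hA : IsCompact A) (hB : IsClosed B)
    (hd : Disjoint A B) : cfun m A + cfun m B ≤ cfun m (A ∪ B) := by
  obtain ⟨τ, hτ, hdisj⟩ := hd.exists_thickenings hA hB
  obtain ⟨j₀, hj₀⟩ := exists_nat_one_div_lt hτ
  rw [cfun_eq_phi hm hcmp (A ∪ B)]
  have hanti : Antitone (fun j : ℕ => phiR m (A ∪ B) (1 / (j + 1))) := by
    intro i j hij
    apply phiR_anti hm hcmp
    have : (i : ℝ) ≤ j := by exact_mod_cast hij
    rw [div_le_div_iff₀ (by positivity) (by positivity)]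
    nlinarith
  rw [iInf_tail_of_antitone hanti j₀]
  refine le_iInf fun j => ?_
  rw [show ((j + j₀ : ℕ) : ℝ) = (j : ℝ) + (j₀ : ℝ) from by push_cast; ring]
  have hεle : (1 : ℝ) / (j + j₀ + 1) ≤ 1 / (j₀ + 1) := by
    rw [div_le_div_iff₀ (by positivity) (by positivity)]
    nlinarith [Nat.cast_nonneg (α := ℝ) j]
  have hdisj' : Disjoint (Metric.thickening (1 / (j + j₀ + 1)) A)
      (Metric.thickening (1 / (j + j₀ + 1)) B) := by
    apply Disjoint.mono _ _ hdisj
    · exact (Metric.thickening_mono (by linarith) A)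
    · exact (Metric.thickening_mono (by linarith) B)
  have hunion : ∀ n, m n (Metric.thickening (1 / (j + j₀ + 1)) (A ∪ B))
      = m n (Metric.thickening (1 / (j + j₀ + 1)) A)
        + m n (Metric.thickening (1 / (j + j₀ + 1)) B) := by
    intro n
    rw [Metric.thickening_union]
    exact measure_union hdisj' Metric.isOpen_thickening.measurableSet
  calc cfun m A + cfun m B
      ≤ phiR m A (1 / (j + j₀ + 1)) + phiR m B (1 / (j + j₀ + 1)) := by
        rw [cfun_eq_phi hm hcmp, cfun_eq_phi hm hcmp]
        have hcast : ((j + j₀ : ℕ) : ℝ) + 1 = (j : ℝ) + (j₀ : ℝ) + 1 := by push_cast; ring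
        have h1 := iInf_le (fun jj : ℕ => phiR m A (1 / (jj + 1))) (j + j₀)
        have h2 := iInf_le (fun jj : ℕ => phiR m B (1 / (jj + 1))) (j + j₀)
        rw [hcast] at h1 h2
        exact add_le_add h1 h2
    _ ≤ liminf (fun n => m n (Metric.thickening (1 / (j + j₀ + 1)) A)
          + m n (Metric.thickening (1 / (j + j₀ + 1)) B)) atTop :=
        ennreal_liminf_superadd _ _
    _ = phiR m (A ∪ B) (1 / (j + j₀ + 1)) := by
        unfold phiR
        congr 1
        funext n
        rw [hunion n]

lemma cfun_univ : cfun m (Set.univ : Set S) = 1 := by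
  have hth : ∀ j : ℕ, Metric.thickening (1 / ((j : ℝ) + 1)) (Set.univ : Set S) = Set.univ :=
    fun j => Set.eq_univ_of_univ_subset
      (Metric.self_subset_thickening (by positivity) _)
  unfold cfun psiR
  have : ∀ j : ℕ, limsup (fun n => m n (Metric.thickening (1 / ((j : ℝ) + 1))
      (Set.univ : Set S))) atTop = 1 := by
    intro j
    rw [hth j]
    have hone : ∀ n, m n (Set.univ : Set S) = 1 := fun n => by
      haveI := hm n
      exact measure_univ
    simp only [hone]
    exact limsup_const 1
  simp only [this, iInf_const]

/-- the limit content -/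
noncomputable def limCont : Content S where
  toFun K := (cfun m K).toNNReal
  mono' K₁ K₂ h := ENNReal.toNNReal_mono (cfun_ne_top hm hcmp _) (cfun_mono hm hcmp h)
  sup_disjoint' K₁ K₂ hd h₁ h₂ := by
    have hcoe : ((K₁ ⊔ K₂ : Compacts S) : Set S) = ↑K₁ ∪ ↑K₂ := rfl
    have heq : cfun m ↑(K₁ ⊔ K₂) = cfun m ↑K₁ + cfun m ↑K₂ := by
      rw [hcoe]
      exact le_antisymm (cfun_union_le hm hcmp _ _)
        (cfun_union_disjoint hm hcmp K₁.2 h₂ hd)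
    show (cfun m ↑(K₁ ⊔ K₂)).toNNReal = (cfun m ↑K₁).toNNReal + (cfun m ↑K₂).toNNReal
    rw [heq, ENNReal.toNNReal_add (cfun_ne_top hm hcmp _) (cfun_ne_top hm hcmp _)]
  sup_le' K₁ K₂ := by
    have hcoe : ((K₁ ⊔ K₂ : Compacts S) : Set S) = ↑K₁ ∪ ↑K₂ := rfl
    show (cfun m ↑(K₁ ⊔ K₂)).toNNReal ≤ (cfun m ↑K₁).toNNReal + (cfun m ↑K₂).toNNReal
    rw [← ENNReal.toNNReal_add (cfun_ne_top hm hcmp _) (cfun_ne_top hm hcmp _)]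
    refine ENNReal.toNNReal_mono ?_ ?_
    · exact ENNReal.add_ne_top.2 ⟨cfun_ne_top hm hcmp _, cfun_ne_top hm hcmp _⟩
    · rw [hcoe]
      exact cfun_union_le hm hcmp _ _

lemma limCont_apply (K : Compacts S) : (limCont hm hcmp : Compacts S → ℝ≥0∞) K = cfun m ↑K := by
  show ((((limCont hm hcmp).toFun K) : ℝ≥0) : ℝ≥0∞) = cfun m ↑K
  show (((cfun m ↑K).toNNReal : ℝ≥0) : ℝ≥0∞) = cfun m ↑K
  exact ENNReal.coe_toNNReal (cfun_ne_top hm hcmp _)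

lemma exists_limit_measure : ∃ ν : Measure S, IsProbabilityMeasure ν ∧
    ∀ U : Set S, IsOpen U → ν U ≤ liminf (fun n => m n U) atTop := by
  set C := limCont hm hcmp with hC
  refine ⟨C.measure, ⟨?_⟩, ?_⟩
  · -- total mass 1
    rw [Content.measure_apply _ MeasurableSet.univ]
    have huniv := C.outerMeasure_opens ⟨Set.univ, isOpen_univ⟩
    rw [show ((⟨Set.univ, isOpen_univ⟩ : Opens S) : Set S) = Set.univ from rfl] at huniv
    rw [huniv]
    apply le_antisymm
    · rw [Content.innerContent]
      refine iSup₂_le fun K _ => ?_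
      rw [hC, limCont_apply hm hcmp K]
      exact cfun_le_one hm hcmp _
    · rw [Content.innerContent]
      refine le_trans ?_ (le_iSup₂_of_le ⟨Set.univ, isCompact_univ⟩ (by simp) le_rfl)
      rw [hC, limCont_apply hm hcmp ⟨Set.univ, isCompact_univ⟩]
      rw [show ((⟨Set.univ, isCompact_univ⟩ : Compacts S) : Set S) = Set.univ from rfl]
      rw [cfun_univ hm hcmp]
  · intro U hU
    rw [Content.measure_apply _ hU.measurableSet,
      C.outerMeasure_of_isOpen U hU, Content.innerContent]
    refine iSup₂_le fun K hKU => ?_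
    rw [hC, limCont_apply hm hcmp K]
    obtain ⟨δ, hδ, hsub⟩ := K.2.exists_thickening_subset_open hU hKU
    apply ENNReal.le_of_forall_pos_le_add
    intro η hη _
    have hrpos : (0 : ℝ) < min (δ / 2) (η : ℝ) := lt_min (by positivity) (by exact_mod_cast hη)
    obtain ⟨j, hj⟩ := exists_nat_one_div_lt hrpos
    have hεpos : (0 : ℝ) < 1 / (j + 1) := by positivity
    have h2ε : 1 / ((j : ℝ) + 1) + 1 / ((j : ℝ) + 1) ≤ δ := by
      have h1 : 1 / ((j : ℝ) + 1) < δ / 2 := hj.trans_le (min_le_left _ _)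
      linarith
    calc cfun m ↑K ≤ psiR m ↑K (1 / (j + 1)) := iInf_le _ j
      _ ≤ phiR m ↑K (1 / (j + 1) + 1 / (j + 1)) + ENNReal.ofReal (1 / (j + 1)) :=
          bridge hm hcmp _ _ _ hεpos hεpos
      _ ≤ liminf (fun n => m n U) atTop + ENNReal.ofReal (1 / (j + 1)) := by
          gcongr
          refine liminf_le_liminf (Eventually.of_forall fun n => measure_mono ?_)
          exact ((Metric.thickening_mono h2ε _).trans hsub)
      _ ≤ liminf (fun n => m n U) atTop + (η : ℝ≥0∞) := by
          gcongr
          calc ENNReal.ofReal (1 / (j + 1)) ≤ ENNReal.ofReal (η : ℝ) :=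
                ENNReal.ofReal_le_ofReal (hj.le.trans (min_le_right _ _))
            _ = (η : ℝ≥0∞) := ENNReal.ofReal_coe_nnreal

end Limit


/-- On a compact metrizable space with a closed partial order, every sequence of
probability measures that is increasing in the stochastic order converges weakly. -/
theorem stmt16 {S : Type*} [MetricSpace S] [CompactSpace S] [PartialOrder S]
    [MeasurableSpace S] [BorelSpace S]
    (hclosed : IsClosed {p : S × S | p.1 ≤ p.2})
    (μ : ℕ → ProbabilityMeasure S)
    (hmono : ∀ n, stochLE (μ n : Measure S) (μ (n + 1) : Measure S)) :
    ∃ ν : ProbabilityMeasure S, Tendsto μ atTop (nhds ν) := by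
  haveI : Nonempty S := by
    by_contra h
    rw [not_nonempty_iff] at h
    have h1 : (μ 0 : Measure S) Set.univ = 1 := measure_univ
    rw [Set.univ_eq_empty_iff.2 h, measure_empty] at h1
    exact zero_ne_one h1
  choose lamf hlam1 hlam2 hlam3 hlam4 using hmono
  have H : ChainHyp lamf (fun n => (μ n : Measure S)) := ⟨hlam1, hlam2, hlam3, hlam4⟩
  have hm : ∀ n, IsProbabilityMeasure ((μ n : Measure S)) := fun n => (μ n).2
  have hcmp : ∀ ε : ℝ, 0 < ε → ∃ n₀ : ℕ, ∀ n k, n₀ ≤ n → n₀ ≤ k → ∀ B : Set S,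
      MeasurableSet B → (μ k : Measure S) B ≤
        (μ n : Measure S) (Metric.thickening ε B) + ENNReal.ofReal ε := by
    intro ε hε
    obtain ⟨n₀, h⟩ := compare H hclosed ε hε
    exact ⟨n₀, fun n k hn hk B hB => h n k hn hk B hB⟩
  obtain ⟨ν, hν, hliminf⟩ := exists_limit_measure hm hcmp
  set ν' : ProbabilityMeasure S := ⟨ν, hν⟩ with hν'
  refine ⟨ν', ?_⟩
  apply MeasureTheory.tendsto_of_forall_isOpen_le_liminf
  intro G hG
  have key : ν G ≤ liminf (fun n => (μ n : Measure S) G) atTop := hliminf G hG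
  have aux : (ENNReal.ofNNReal (liminf (fun i => μ i G) atTop)) =
      liminf (fun i => ((μ i G : ℝ≥0) : ℝ≥0∞)) atTop := by
    refine Monotone.map_liminf_of_continuousAt (F := atTop) ENNReal.coe_mono
      (fun i => μ i G) ?_ ?_ ?_
    · exact ENNReal.continuous_coe.continuousAt
    · exact IsBoundedUnder.isCoboundedUnder_ge ⟨1, by simp⟩
    · exact ⟨0, by simp⟩
  rw [← ENNReal.coe_le_coe, aux]
  have hl : (fun i => ((μ i G : ℝ≥0) : ℝ≥0∞)) = fun i => (μ i : Measure S) G := by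
    funext i
    exact ProbabilityMeasure.ennreal_coeFn_eq_coeFn_toMeasure (μ i) G
  rw [hl]
  have hlhs : (((ν' G : ℝ≥0)) : ℝ≥0∞) = ν G :=
    ProbabilityMeasure.ennreal_coeFn_eq_coeFn_toMeasure _ G
  rw [hlhs]
  exact key
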